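/- Let ℓ > 0 and let h : ℝ → ℝ be measurable with |h(x)| ≤ ℓ e^{x} (1+|x|³) for x < 0 and |h(x)| ≤ ℓ e^{−5x/2} (1+|x|³) for x ≥ 0. Let −1/2 < A < 1 and −5/2 < B < −1/2, let N > 0, and let f₀ be measurable with |f₀(x)| ≤ N e^{Ax} for x < 0 and |f₀(x)| ≤ N e^{Bx} for x ≥ 0. Then ∫_ℝ |(h∗f₀)(x)| e^{x/2} dx ≤ C ℓ N for a constant C = C(A,B) > 0; in particular h∗f₀ ∈ L¹(ℝ, e^{x/2} dx). -/

import Mathlib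

open MeasureTheory
open scoped ENNReal

lemma aux_cube_le (x : ℝ) : 1 + |x| ^ 3 ≤ 385 * Real.exp (|x| / 4) := by
  have hx : (0:ℝ) ≤ |x| / 4 := by positivity
  have h1 : (|x| / 4) ^ 3 / (Nat.factorial 3 : ℝ) ≤ Real.exp (|x| / 4) := by
    refine le_trans ?_ (Real.sum_le_exp_of_nonneg hx 4)
    refine Finset.single_le_sum (f := fun i => (|x| / 4) ^ i / (Nat.factorial i : ℝ))
      (fun i _ => by positivity) (by norm_num : (3:ℕ) ∈ Finset.range 4)
  have h2 : |x| ^ 3 ≤ 384 * Real.exp (|x| / 4) := by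
    have : (|x| / 4) ^ 3 / (Nat.factorial 3 : ℝ) = |x| ^ 3 / 384 := by
      norm_num [Nat.factorial]; ring
    rw [this] at h1; linarith
  have h3 : (1:ℝ) ≤ Real.exp (|x| / 4) := Real.one_le_exp hx
  linarith

lemma aux_integrable {a b : ℝ} (ha : 0 < a) (hb : 0 < b) :
    Integrable (fun x : ℝ => if x < 0 then Real.exp (a * x) else Real.exp (-b * x)) := by
  have h1 : Integrable ((Set.Ioi (0:ℝ)).indicator fun x => Real.exp (-b * x)) :=
    (integrable_indicator_iff measurableSet_Ioi).2 (exp_neg_integrableOn_Ioi 0 hb)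
  have h2 : Integrable ((Set.Ioi (0:ℝ)).indicator fun x => Real.exp (-a * x)) :=
    (integrable_indicator_iff measurableSet_Ioi).2 (exp_neg_integrableOn_Ioi 0 ha)
  have h3 := h2.comp_neg
  have h4 := h3.add h1
  refine h4.congr ?_
  have h0 : ∀ᵐ x : ℝ, x ≠ 0 := by
    rw [MeasureTheory.ae_iff]
    simp only [ne_eq, not_not, Set.setOf_eq_eq_singleton]
    exact Real.volume_singleton
  filter_upwards [h0] with x hx
  rcases lt_trichotomy x 0 with hlt | heq | hgt
  · have hmem : -x ∈ Set.Ioi (0:ℝ) := by simp [Set.mem_Ioi]; linarith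
    have hnmem : x ∉ Set.Ioi (0:ℝ) := by simp [Set.mem_Ioi]; linarith
    simp [Set.indicator_of_mem hmem, Set.indicator_of_notMem hnmem, if_pos hlt]
  · exact absurd heq hx
  · have hmem : x ∈ Set.Ioi (0:ℝ) := hgt
    have hnmem : -x ∉ Set.Ioi (0:ℝ) := by simp [Set.mem_Ioi]; linarith
    simp [Set.indicator_of_mem hmem, Set.indicator_of_notMem hnmem, if_neg (not_lt.2 hgt.le)]

theorem stmt17 (A B : ℝ) (hA1 : -1/2 < A) (hA2 : A < 1) (hB1 : -5/2 < B) (hB2 : B < -1/2) :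
    ∃ C : ℝ, 0 < C ∧ ∀ ℓ : ℝ, 0 < ℓ → ∀ h : ℝ → ℝ, Measurable h →
      (∀ x : ℝ, x < 0 → |h x| ≤ ℓ * Real.exp x * (1 + |x| ^ 3)) →
      (∀ x : ℝ, 0 ≤ x → |h x| ≤ ℓ * Real.exp (-(5 * x) / 2) * (1 + |x| ^ 3)) →
      ∀ N : ℝ, 0 < N → ∀ f₀ : ℝ → ℝ, Measurable f₀ →
      (∀ x : ℝ, x < 0 → |f₀ x| ≤ N * Real.exp (A * x)) →
      (∀ x : ℝ, 0 ≤ x → |f₀ x| ≤ N * Real.exp (B * x)) →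
      -- `∫ |(h∗f₀)(x)| e^{x/2} dx ≤ C ℓ N`
      (∫⁻ x : ℝ, ENNReal.ofReal (|∫ y, h (x - y) * f₀ y| * Real.exp (x / 2))) ≤
        ENNReal.ofReal (C * ℓ * N) ∧
      -- in particular `h ∗ f₀ ∈ L¹(ℝ, e^{x/2} dx)`
      Integrable (fun x => (∫ y, h (x - y) * f₀ y) * Real.exp (x / 2)) := by
  classical
  -- bounding profiles
  set g1 : ℝ → ℝ := fun z => if z < 0 then Real.exp ((5/4) * z) else Real.exp (-(7/4) * z)
    with hg1def
  set g2 : ℝ → ℝ := fun y =>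
    if y < 0 then Real.exp ((A + 1/2) * y) else Real.exp (-(-(B + 1/2)) * y) with hg2def
  have hg1int : Integrable g1 := aux_integrable (by norm_num) (by norm_num)
  have hg2int : Integrable g2 := aux_integrable (by linarith) (by linarith)
  have hg1nonneg : ∀ z, 0 ≤ g1 z := fun z => by
    simp only [hg1def]; split <;> positivity
  have hg2nonneg : ∀ y, 0 ≤ g2 y := fun y => by
    simp only [hg2def]; split <;> positivity
  have hg1meas : Measurable g1 := by
    apply Measurable.ite (measurableSet_Iio (a := (0:ℝ))) <;> fun_prop
  have hg2meas : Measurable g2 := by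
    apply Measurable.ite (measurableSet_Iio (a := (0:ℝ))) <;> fun_prop
  set I1 : ℝ := ∫ z, g1 z with hI1
  set I2 : ℝ := ∫ y, g2 y with hI2
  have hI1nn : 0 ≤ I1 := integral_nonneg hg1nonneg
  have hI2nn : 0 ≤ I2 := integral_nonneg hg2nonneg
  refine ⟨385 * (I1 + 1) * (I2 + 1), by positivity, ?_⟩
  intro ℓ hℓ h hmeas hhneg hhpos N hN f₀ hf₀meas hf₀neg hf₀pos
  -- pointwise bounds
  have Bh : ∀ z : ℝ, |h z| * Real.exp (z / 2) ≤ 385 * ℓ * g1 z := by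
    intro z
    rcases lt_or_ge z 0 with hz | hz
    · have h1 : |h z| ≤ ℓ * Real.exp z * (1 + |z| ^ 3) := hhneg z hz
      have h2 : 1 + |z| ^ 3 ≤ 385 * Real.exp (|z| / 4) := aux_cube_le z
      have habs : |z| = -z := abs_of_neg hz
      have h3 : |h z| * Real.exp (z / 2) ≤
          ℓ * Real.exp z * (385 * Real.exp (-z / 4)) * Real.exp (z / 2) := by
        have := mul_le_mul (mul_le_mul_of_nonneg_left h2 (by positivity : (0:ℝ) ≤ ℓ * Real.exp z))
          (le_refl (Real.exp (z / 2))) (Real.exp_nonneg _)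
          (by positivity)
        calc |h z| * Real.exp (z / 2) ≤ (ℓ * Real.exp z * (1 + |z| ^ 3)) * Real.exp (z / 2) :=
              mul_le_mul_of_nonneg_right h1 (Real.exp_nonneg _)
          _ ≤ (ℓ * Real.exp z * (385 * Real.exp (|z| / 4))) * Real.exp (z / 2) := this
          _ = ℓ * Real.exp z * (385 * Real.exp (-z / 4)) * Real.exp (z / 2) := by rw [habs]
      have : ℓ * Real.exp z * (385 * Real.exp (-z / 4)) * Real.exp (z / 2)
          = 385 * ℓ * Real.exp ((5/4) * z) := by
        have e : Real.exp ((5/4) * z) = Real.exp z * Real.exp (-z / 4) * Real.exp (z / 2) := by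
          rw [← Real.exp_add, ← Real.exp_add]; ring_nf
        rw [e]; ring
      rw [this] at h3
      simpa [hg1def, if_pos hz] using h3
    · have h1 : |h z| ≤ ℓ * Real.exp (-(5 * z) / 2) * (1 + |z| ^ 3) := hhpos z hz
      have h2 : 1 + |z| ^ 3 ≤ 385 * Real.exp (|z| / 4) := aux_cube_le z
      have habs : |z| = z := abs_of_nonneg hz
      have h3 : |h z| * Real.exp (z / 2) ≤
          ℓ * Real.exp (-(5 * z) / 2) * (385 * Real.exp (z / 4)) * Real.exp (z / 2) := by
        have := mul_le_mul (mul_le_mul_of_nonneg_left h2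
          (by positivity : (0:ℝ) ≤ ℓ * Real.exp (-(5 * z) / 2)))
          (le_refl (Real.exp (z / 2))) (Real.exp_nonneg _) (by positivity)
        calc |h z| * Real.exp (z / 2)
            ≤ (ℓ * Real.exp (-(5 * z) / 2) * (1 + |z| ^ 3)) * Real.exp (z / 2) :=
              mul_le_mul_of_nonneg_right h1 (Real.exp_nonneg _)
          _ ≤ (ℓ * Real.exp (-(5 * z) / 2) * (385 * Real.exp (|z| / 4))) * Real.exp (z / 2) := this
          _ = ℓ * Real.exp (-(5 * z) / 2) * (385 * Real.exp (z / 4)) * Real.exp (z / 2) := by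
              rw [habs]
      have : ℓ * Real.exp (-(5 * z) / 2) * (385 * Real.exp (z / 4)) * Real.exp (z / 2)
          = 385 * ℓ * Real.exp (-(7/4) * z) := by
        have e : Real.exp (-(7/4) * z) =
            Real.exp (-(5 * z) / 2) * Real.exp (z / 4) * Real.exp (z / 2) := by
          rw [← Real.exp_add, ← Real.exp_add]; ring_nf
        rw [e]; ring
      rw [this] at h3
      simpa [hg1def, if_neg (not_lt.2 hz)] using h3
  have Bf : ∀ y : ℝ, |f₀ y| * Real.exp (y / 2) ≤ N * g2 y := by
    intro y
    rcases lt_or_ge y 0 with hy | hy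
    · have h1 : |f₀ y| ≤ N * Real.exp (A * y) := hf₀neg y hy
      have : N * Real.exp (A * y) * Real.exp (y / 2) = N * Real.exp ((A + 1/2) * y) := by
        rw [mul_assoc, ← Real.exp_add]
        congr 1
        ring
      calc |f₀ y| * Real.exp (y / 2) ≤ N * Real.exp (A * y) * Real.exp (y / 2) :=
            mul_le_mul_of_nonneg_right h1 (Real.exp_nonneg _)
        _ = N * g2 y := by rw [this]; simp [hg2def, if_pos hy]
    · have h1 : |f₀ y| ≤ N * Real.exp (B * y) := hf₀pos y hy
      have : N * Real.exp (B * y) * Real.exp (y / 2) = N * Real.exp (-(-(B + 1/2)) * y) := by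
        rw [mul_assoc, ← Real.exp_add]
        congr 1
        ring
      calc |f₀ y| * Real.exp (y / 2) ≤ N * Real.exp (B * y) * Real.exp (y / 2) :=
            mul_le_mul_of_nonneg_right h1 (Real.exp_nonneg _)
        _ = N * g2 y := by rw [this]; simp [hg2def, if_neg (not_lt.2 hy)]
  -- main estimate
  have key : (∫⁻ x : ℝ, ENNReal.ofReal (|∫ y, h (x - y) * f₀ y| * Real.exp (x / 2))) ≤
      ENNReal.ofReal (385 * ℓ * I1) * ENNReal.ofReal (N * I2) := by
    have step1 : ∀ x : ℝ, ENNReal.ofReal (|∫ y, h (x - y) * f₀ y| * Real.exp (x / 2)) ≤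
        ∫⁻ y, ENNReal.ofReal (385 * ℓ * g1 (x - y)) * ENNReal.ofReal (N * g2 y) := by
      intro x
      have e1 : ENNReal.ofReal (|∫ y, h (x - y) * f₀ y| * Real.exp (x / 2)) =
          ENNReal.ofReal |∫ y, h (x - y) * f₀ y| * ENNReal.ofReal (Real.exp (x / 2)) :=
        ENNReal.ofReal_mul (abs_nonneg _)
      have e2 : ENNReal.ofReal |∫ y, h (x - y) * f₀ y| ≤
          ∫⁻ y, ENNReal.ofReal |h (x - y) * f₀ y| := by
        calc ENNReal.ofReal |∫ y, h (x - y) * f₀ y|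
            = ‖∫ y, h (x - y) * f₀ y‖ₑ := (Real.enorm_eq_ofReal_abs _).symm
          _ ≤ ∫⁻ y, ‖h (x - y) * f₀ y‖ₑ := enorm_integral_le_lintegral_enorm _
          _ = ∫⁻ y, ENNReal.ofReal |h (x - y) * f₀ y| := by
              simp_rw [Real.enorm_eq_ofReal_abs]
      have e3 : (∫⁻ y, ENNReal.ofReal |h (x - y) * f₀ y|) * ENNReal.ofReal (Real.exp (x / 2))
          = ∫⁻ y, ENNReal.ofReal |h (x - y) * f₀ y| * ENNReal.ofReal (Real.exp (x / 2)) := by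
        have hm : AEMeasurable (fun y : ℝ => ENNReal.ofReal |h (x - y) * f₀ y|) volume :=
          (((hmeas.comp (measurable_const.sub measurable_id)).mul hf₀meas).abs).ennreal_ofReal.aemeasurable
        rw [lintegral_mul_const'' _ hm]
      calc ENNReal.ofReal (|∫ y, h (x - y) * f₀ y| * Real.exp (x / 2))
          ≤ (∫⁻ y, ENNReal.ofReal |h (x - y) * f₀ y|) * ENNReal.ofReal (Real.exp (x / 2)) := by
            rw [e1]; exact mul_le_mul_left e2 _
        _ = ∫⁻ y, ENNReal.ofReal |h (x - y) * f₀ y| * ENNReal.ofReal (Real.exp (x / 2)) := e3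
        _ ≤ ∫⁻ y, ENNReal.ofReal (385 * ℓ * g1 (x - y)) * ENNReal.ofReal (N * g2 y) := by
            refine lintegral_mono fun y => ?_
            rw [← ENNReal.ofReal_mul (abs_nonneg _), ← ENNReal.ofReal_mul (by positivity)]
            refine ENNReal.ofReal_le_ofReal ?_
            have hsplit : Real.exp (x / 2) = Real.exp ((x - y) / 2) * Real.exp (y / 2) := by
              rw [← Real.exp_add]; ring_nf
            calc |h (x - y) * f₀ y| * Real.exp (x / 2)
                = (|h (x - y)| * Real.exp ((x - y) / 2)) * (|f₀ y| * Real.exp (y / 2)) := by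
                  rw [abs_mul, hsplit]; ring
              _ ≤ (385 * ℓ * g1 (x - y)) * (N * g2 y) := by
                  refine mul_le_mul (Bh _) (Bf _) (by positivity) ?_
                  have := hg1nonneg (x - y); positivity
    calc (∫⁻ x : ℝ, ENNReal.ofReal (|∫ y, h (x - y) * f₀ y| * Real.exp (x / 2)))
        ≤ ∫⁻ x, ∫⁻ y, ENNReal.ofReal (385 * ℓ * g1 (x - y)) * ENNReal.ofReal (N * g2 y) :=
          lintegral_mono step1
      _ = ∫⁻ y, ∫⁻ x, ENNReal.ofReal (385 * ℓ * g1 (x - y)) * ENNReal.ofReal (N * g2 y) := by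
          refine lintegral_lintegral_swap ?_
          apply Measurable.aemeasurable
          refine Measurable.mul (f := fun p : ℝ × ℝ => ENNReal.ofReal (385 * ℓ * g1 (p.1 - p.2)))
            (g := fun p : ℝ × ℝ => ENNReal.ofReal (N * g2 p.2)) ?_ ?_
          · exact ENNReal.measurable_ofReal.comp
              ((measurable_const.mul (hg1meas.comp (measurable_fst.sub measurable_snd))))
          · exact ENNReal.measurable_ofReal.comp
              ((measurable_const.mul (hg2meas.comp measurable_snd)))
      _ = ∫⁻ y, (∫⁻ x, ENNReal.ofReal (385 * ℓ * g1 x)) * ENNReal.ofReal (N * g2 y) := by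
          refine lintegral_congr fun y => ?_
          have hm : AEMeasurable (fun x : ℝ => ENNReal.ofReal (385 * ℓ * g1 (x - y))) volume :=
            ((measurable_const.mul (hg1meas.comp (measurable_id.sub measurable_const)))).ennreal_ofReal.aemeasurable
          rw [lintegral_mul_const'' _ hm]
          congr 1
          exact lintegral_sub_right_eq_self (fun x => ENNReal.ofReal (385 * ℓ * g1 x)) y
      _ = (∫⁻ x, ENNReal.ofReal (385 * ℓ * g1 x)) * ∫⁻ y, ENNReal.ofReal (N * g2 y) := by
          have hm : AEMeasurable (fun y : ℝ => ENNReal.ofReal (N * g2 y)) volume :=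
            (measurable_const.mul hg2meas).ennreal_ofReal.aemeasurable
          rw [lintegral_const_mul'' _ hm]
      _ = ENNReal.ofReal (385 * ℓ * I1) * ENNReal.ofReal (N * I2) := by
          rw [← ofReal_integral_eq_lintegral_ofReal (hg1int.const_mul _)
            (Filter.Eventually.of_forall fun z => by have := hg1nonneg z; positivity),
            ← ofReal_integral_eq_lintegral_ofReal (hg2int.const_mul _)
            (Filter.Eventually.of_forall fun y => by have := hg2nonneg y; positivity),
            integral_const_mul, integral_const_mul, ← hI1, ← hI2]
  have final : ENNReal.ofReal (385 * ℓ * I1) * ENNReal.ofReal (N * I2) ≤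
      ENNReal.ofReal (385 * (I1 + 1) * (I2 + 1) * ℓ * N) := by
    rw [← ENNReal.ofReal_mul (by positivity)]
    refine ENNReal.ofReal_le_ofReal ?_
    nlinarith [mul_pos hℓ hN, hI1nn, hI2nn]
  have part1 := key.trans final
  refine ⟨part1, ?_⟩
  constructor
  · -- a.e. strong measurability
    have hsm : StronglyMeasurable fun x : ℝ => ∫ y, h (x - y) * f₀ y := by
      have : StronglyMeasurable fun p : ℝ × ℝ => h (p.1 - p.2) * f₀ p.2 :=
        ((hmeas.comp (measurable_fst.sub measurable_snd)).mul
          (hf₀meas.comp measurable_snd)).stronglyMeasurable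
      exact this.integral_prod_right'
    exact (hsm.mul ((Real.measurable_exp.comp (measurable_id.div_const 2)).stronglyMeasurable)).aestronglyMeasurable
  · -- finite integral
    have heq : (fun x : ℝ => ‖(∫ y, h (x - y) * f₀ y) * Real.exp (x / 2)‖ₑ) =
        fun x : ℝ => ENNReal.ofReal (|∫ y, h (x - y) * f₀ y| * Real.exp (x / 2)) := by
      funext x
      rw [Real.enorm_eq_ofReal_abs, abs_mul, abs_of_pos (Real.exp_pos _)]
    unfold HasFiniteIntegral
    show ∫⁻ x, ‖(∫ y, h (x - y) * f₀ y) * Real.exp (x / 2)‖ₑ < ⊤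
    rw [heq]
    exact lt_of_le_of_lt part1 ENNReal.ofReal_lt_top
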